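/- Let 0 < u, σ > 0, P ∈ (0,1], K > 0, and let Δ_A : [0,u] → ℝ be continuously differentiable with Δ_A(s) > 0 for all s ∈ [0,u]. Define f(v) = K·(Δ_A(u)/Δ_A(v))²·exp(−(2/σ²)∫_v^u 1/Δ_A(s) ds) for v ∈ (0,u). Then f is differentiable on (0,u) and satisfies f′(v) = (B(v)/D(v))·f(v), where B(v) = P·Δ_A(v) − (σ²/2)·d/dv[P·Δ_A(v)²] and D(v) = (σ²P/2)·Δ_A(v)². -/

import Mathlib

open Real

/-- The acceleration branch `v < u` of the one-parameter family of stationary distributions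
of the Fokker-Planck traffic model solves the stationary ODE `f′(v) = (B(v)/D(v)) f(v)`,
where `B = PΔ_A − (σ²/2)(P Δ_A²)′` and `D = (σ²P/2) Δ_A²`. -/
theorem stationary_solution_acceleration_branch (u σ P K : ℝ) (hu : 0 < u) (hσ : 0 < σ)
    (hP : P ∈ Set.Ioc (0 : ℝ) 1) (hK : 0 < K)
    (ΔA : ℝ → ℝ) (hΔA : ContDiffOn ℝ 1 ΔA (Set.Icc 0 u))
    (hΔApos : ∀ s ∈ Set.Icc (0 : ℝ) u, 0 < ΔA s) :
    ∀ v ∈ Set.Ioo (0 : ℝ) u,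
      HasDerivAt
        (fun w => K * (ΔA u / ΔA w) ^ 2 * Real.exp (-(2 / σ ^ 2) * ∫ s in w..u, 1 / ΔA s))
        ((P * ΔA v - σ ^ 2 / 2 * deriv (fun w => P * ΔA w ^ 2) v)
            / (σ ^ 2 * P / 2 * ΔA v ^ 2)
          * (K * (ΔA u / ΔA v) ^ 2 * Real.exp (-(2 / σ ^ 2) * ∫ s in v..u, 1 / ΔA s)))
        v := by
  intro v hv
  have hvIcc : v ∈ Set.Icc (0 : ℝ) u := ⟨hv.1.le, hv.2.le⟩
  have hΔAv : 0 < ΔA v := hΔApos v hvIcc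
  have hne : ΔA v ≠ 0 := hΔAv.ne'
  have hmem : Set.Icc (0 : ℝ) u ∈ nhds v := Icc_mem_nhds hv.1 hv.2
  have hdiff : DifferentiableAt ℝ ΔA v :=
    (hΔA.contDiffAt hmem).differentiableAt one_ne_zero
  set d := deriv ΔA v with hdd
  have hd : HasDerivAt ΔA d v := hdiff.hasDerivAt
  -- derivative of P * ΔA^2
  have hderivP : deriv (fun w => P * ΔA w ^ 2) v = P * (2 * ΔA v * d) := by
    have : HasDerivAt (fun w => P * ΔA w ^ 2) (P * ((2 : ℕ) * ΔA v ^ 1 * d)) v :=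
      (hd.pow 2).const_mul P
    simpa using this.deriv
  -- continuity of 1/ΔA on Icc
  have hcont : ContinuousOn (fun s => 1 / ΔA s) (Set.Icc 0 u) :=
    continuousOn_const.div hΔA.continuousOn (fun s hs => (hΔApos s hs).ne')
  have hsub : Set.uIcc v u ⊆ Set.Icc 0 u := by
    rw [Set.uIcc_of_le hv.2.le]
    exact Set.Icc_subset_Icc hv.1.le le_rfl
  have hint : IntervalIntegrable (fun s => 1 / ΔA s) MeasureTheory.volume v u :=
    (hcont.mono hsub).intervalIntegrable
  have hcontAt : ContinuousAt (fun s => 1 / ΔA s) v :=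
    hcont.continuousAt hmem
  have hmeas : StronglyMeasurableAtFilter (fun s => 1 / ΔA s) (nhds v) :=
    ⟨Set.Icc 0 u, hmem, hcont.aestronglyMeasurable measurableSet_Icc⟩
  have hg : HasDerivAt (fun w => ∫ s in w..u, 1 / ΔA s) (-(1 / ΔA v)) v :=
    intervalIntegral.integral_hasDerivAt_left hint hmeas hcontAt
  -- exp part
  have hexp : HasDerivAt (fun w => Real.exp (-(2 / σ ^ 2) * ∫ s in w..u, 1 / ΔA s))
      (Real.exp (-(2 / σ ^ 2) * ∫ s in v..u, 1 / ΔA s) * (-(2 / σ ^ 2) * -(1 / ΔA v))) v :=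
    (hg.const_mul (-(2 / σ ^ 2))).exp
  -- ratio squared part
  have hratio : HasDerivAt (fun w => K * (ΔA u / ΔA w) ^ 2)
      (K * ((2 : ℕ) * (ΔA u / ΔA v) ^ 1 * ((0 * ΔA v - ΔA u * d) / ΔA v ^ 2))) v := by
    exact (((hasDerivAt_const v (ΔA u)).div hd hne).pow 2).const_mul K
  have hprod := hratio.mul hexp
  refine hprod.congr_deriv ?_
  rw [hderivP]
  have hσ2 : (σ : ℝ) ^ 2 ≠ 0 := pow_ne_zero 2 hσ.ne'
  have hPne : P ≠ 0 := hP.1.ne'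
  field_simp
  ring
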